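/- Let α > 0, a > 0, τ ∈ ℂ, and let U_s : [0, ∞) → ℝ be four times continuously differentiable with U_s'(a) = 0, U_s''(a) ≠ 0, and sup_{y ≥ 0} e^{α·y}·|U_s^{(j)}(y)| < ∞ for j = 0, 1, 2, 3, 4; set κ := (|U_s''(a)|/2)^{1/4}. Let W : ℝ → ℂ be differentiable with constants C_W > 0, c > 0 such that |W(z) − 1| ≤ C_W·e^{−c·z²} for z ≥ 0, |W(z)| ≤ C_W·e^{−c·z²} for z < 0, and |W'(z)| ≤ C_W·e^{−c·z²} for all z ∈ ℝ. For each natural number k ≥ 1 define F_{1,k}(y) := ( U_s(y) − U_s(a) − (U_s''(a)/2)·(y−a)² )·U_s''(a)·(y−a) − ( U_s'(y) − U_s''(a)·(y−a) )·( τ·k^{−1/2} + (U_s''(a)/2)·(y−a)² ), F_{2,k}(y) := ( U_s(y) − U_s(a) − (U_s''(a)/2)·(y−a)² )·( τ·k^{−1/2} + (U_s''(a)/2)·(y−a)² ), and ℛ_k(y) := i·k^{−1}·H(y−a)·U_s'''(y) + F_{1,k}(y)·( W(κ·k^{1/4}·(y−a)) − H(y−a) ) + F_{2,k}(y)·W'(κ·k^{1/4}·(y−a)).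 Then there exists a constant C_R > 0 such that for every natural number k ≥ 1, k·sup_{y ≥ 0} e^{α·y}·|ℛ_k(y)| ≤ C_R. -/

import Mathlib

lemma aux_lin_exp (γ x : ℝ) (hγ : 0 < γ) (hx : 0 ≤ x) :
    x * Real.exp (-(γ * x)) ≤ 1 / γ := by
  have h1 : γ * x ≤ Real.exp (γ * x) := by
    nlinarith [Real.add_one_le_exp (γ * x)]
  have he : (0:ℝ) < Real.exp (γ * x) := Real.exp_pos _
  rw [Real.exp_neg, ← div_eq_mul_inv, div_le_div_iff₀ he hγ]
  nlinarith

lemma aux_sq_exp (γ x : ℝ) (hγ : 0 < γ) (hx : 0 ≤ x) :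
    x ^ 2 * Real.exp (-(γ * x)) ≤ 4 / γ ^ 2 := by
  have h := aux_lin_exp (γ/2) x (by linarith) hx
  have hE : (0:ℝ) ≤ x * Real.exp (-(γ/2 * x)) :=
    mul_nonneg hx (Real.exp_pos _).le
  have hsplit : Real.exp (-(γ * x)) = Real.exp (-(γ/2 * x)) * Real.exp (-(γ/2 * x)) := by
    rw [← Real.exp_add]; ring_nf
  have hsq := mul_self_le_mul_self hE h
  have h2 : (1 / (γ/2)) * (1 / (γ/2)) = 4 / γ ^ 2 := by
    field_simp; ring
  nlinarith [hsq]

lemma aux_quad (α γ t : ℝ) (hγ : 0 < γ) :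
    Real.exp (α * t - γ * t ^ 2) ≤ Real.exp (α ^ 2 / (4 * γ)) := by
  apply Real.exp_le_exp.mpr
  rw [le_div_iff₀ (by linarith : (0:ℝ) < 4 * γ)]
  nlinarith [sq_nonneg (2 * γ * t - α)]

lemma abs_sub_le_uIcc {a y x : ℝ} (hx : x ∈ Set.uIcc a y) : |x - a| ≤ |y - a| := by
  rcases le_total a y with h | h
  · rw [Set.uIcc_of_le h] at hx
    rw [abs_of_nonneg (by linarith [hx.1]), abs_of_nonneg (by linarith)]
    linarith [hx.2]
  · rw [Set.uIcc_of_ge h] at hx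
    rw [abs_of_nonpos (by linarith [hx.2]), abs_of_nonpos (by linarith)]
    linarith [hx.1]

lemma mvt_abs (f f' : ℝ → ℝ) (a y C : ℝ)
    (hf : ∀ x ∈ Set.uIcc a y, HasDerivAt f (f' x) x)
    (hC : ∀ x ∈ Set.uIcc a y, |f' x| ≤ C) :
    |f y - f a| ≤ C * |y - a| := by
  have := Convex.norm_image_sub_le_of_norm_hasDerivWithin_le
    (f := f) (f' := f') (s := Set.uIcc a y)
    (fun x hx => (hf x hx).hasDerivWithinAt) (fun x hx => hC x hx)
    (convex_uIcc a y) Set.left_mem_uIcc Set.right_mem_uIcc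
  simpa [Real.norm_eq_abs] using this

lemma uIcc_nonneg {a y x : ℝ} (ha : 0 ≤ a) (hy : 0 ≤ y) (hx : x ∈ Set.uIcc a y) : 0 ≤ x :=
  le_trans (le_min ha hy) hx.1

lemma taylor_bounds (Us : ℝ → ℝ) (hUs : ContDiff ℝ 4 Us) (a : ℝ) (ha : 0 ≤ a)
    (hUsa' : deriv Us a = 0) (b : ℝ) (hb : b = deriv (deriv Us) a)
    (M : ℝ) (hM0 : 0 ≤ M) (hM3 : ∀ x : ℝ, 0 ≤ x → |iteratedDeriv 3 Us x| ≤ M) :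
    (∀ y, 0 ≤ y → |iteratedDeriv 2 Us y - b| ≤ M * |y - a|) ∧
    (∀ y, 0 ≤ y → |deriv Us y - b * (y - a)| ≤ M * |y - a| ^ 2) ∧
    (∀ y, 0 ≤ y → |Us y - Us a - b / 2 * (y - a) ^ 2| ≤ M * |y - a| ^ 3) := by
  have hUsd : Differentiable ℝ Us := hUs.differentiable (by norm_num)
  have hd1 : Differentiable ℝ (deriv Us) := by
    have := hUs.differentiable_iteratedDeriv 1 (by norm_num)
    simpa [iteratedDeriv_one] using this
  have hd2 : Differentiable ℝ (iteratedDeriv 2 Us) :=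
    hUs.differentiable_iteratedDeriv 2 (by norm_num)
  have hdd2 : deriv (deriv Us) = iteratedDeriv 2 Us := by
    rw [iteratedDeriv_succ, iteratedDeriv_one]
  have hdd3 : deriv (iteratedDeriv 2 Us) = iteratedDeriv 3 Us := iteratedDeriv_succ.symm
  have hba : iteratedDeriv 2 Us a = b := by rw [hb, hdd2]
  have h2 : ∀ y, 0 ≤ y → |iteratedDeriv 2 Us y - b| ≤ M * |y - a| := by
    intro y hy
    have := mvt_abs (iteratedDeriv 2 Us) (iteratedDeriv 3 Us) a y M
      (fun x _ => by rw [← hdd3]; exact (hd2 x).hasDerivAt)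
      (fun x hx => hM3 x (uIcc_nonneg ha hy hx))
    rwa [hba] at this
  have h1d : ∀ y, 0 ≤ y → |deriv Us y - b * (y - a)| ≤ M * |y - a| ^ 2 := by
    intro y hy
    have key := mvt_abs (fun x => deriv Us x - b * (x - a)) (fun x => iteratedDeriv 2 Us x - b)
      a y (M * |y - a|)
      (fun x _ => by
        have hA : HasDerivAt (deriv Us) (iteratedDeriv 2 Us x) x := by
          rw [← hdd2]; exact (hd1 x).hasDerivAt
        have hB : HasDerivAt (fun x => b * (x - a)) (b * 1) x :=
          ((hasDerivAt_id x).sub_const a).const_mul b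
        exact (hA.sub hB).congr_deriv (by ring))
      (fun x hx => le_trans (h2 x (uIcc_nonneg ha hy hx))
        (mul_le_mul_of_nonneg_left (abs_sub_le_uIcc hx) hM0))
    beta_reduce at key
    have e1 : deriv Us a - b * (a - a) = 0 := by rw [hUsa']; ring
    rw [e1, sub_zero] at key
    calc |deriv Us y - b * (y - a)| ≤ M * |y - a| * |y - a| := key
      _ = M * |y - a| ^ 2 := by ring
  refine ⟨h2, h1d, ?_⟩
  intro y hy
  have key := mvt_abs (fun x => Us x - b / 2 * (x - a) ^ 2) (fun x => deriv Us x - b * (x - a))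
    a y (M * |y - a| ^ 2)
    (fun x _ => by
      have hA : HasDerivAt Us (deriv Us x) x := (hUsd x).hasDerivAt
      have hB : HasDerivAt (fun x => b / 2 * (x - a) ^ 2)
          (b / 2 * ((2 : ℕ) * (x - a) ^ 1 * 1)) x :=
        (((hasDerivAt_id x).sub_const a).pow 2).const_mul (b / 2)
      have := hA.sub hB
      exact this.congr_deriv (by push_cast; ring))
    (fun x hx => le_trans (h1d x (uIcc_nonneg ha hy hx))
      (mul_le_mul_of_nonneg_left
        (pow_le_pow_left₀ (abs_nonneg _) (abs_sub_le_uIcc hx) 2) hM0))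
  beta_reduce at key
  have e2 : Us a - b / 2 * (a - a) ^ 2 = Us a := by ring
  rw [e2] at key
  calc |Us y - Us a - b / 2 * (y - a) ^ 2|
      = |Us y - b / 2 * (y - a) ^ 2 - Us a| := by ring_nf
    _ ≤ M * |y - a| ^ 2 * |y - a| := key
    _ = M * |y - a| ^ 3 := by ring

/-- The Heaviside function with `H(z) = 1` for `z > 0` and `H(z) = 0` for `z ≤ 0`,
viewed as a complex-valued function. -/
noncomputable def Heav (z : ℝ) : ℂ := if 0 < z then 1 else 0

lemma tri_aux (X Y Y' Z Z' : ℂ) : ‖X + Y * Y' + Z * Z'‖ ≤ ‖X‖ + ‖Y‖ * ‖Y'‖ + ‖Z‖ * ‖Z'‖ := by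
  calc ‖X + Y * Y' + Z * Z'‖ ≤ ‖X + Y * Y'‖ + ‖Z * Z'‖ := norm_add_le _ _
    _ ≤ ‖X‖ + ‖Y * Y'‖ + ‖Z * Z'‖ := add_le_add (norm_add_le _ _) le_rfl
    _ = ‖X‖ + ‖Y‖ * ‖Y'‖ + ‖Z‖ * ‖Z'‖ := by rw [norm_mul, norm_mul]

set_option maxHeartbeats 1000000 in
/-- The uniform remainder bound `k ‖ℛ_k‖ ≤ C_R` of Proposition A.1 of the paper
for the explicit Prandtl remainders (A.5)–(A.7). -/
theorem stmt18 (α a : ℝ) (hα : 0 < α) (ha : 0 < a) (τ : ℂ)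
    (Us : ℝ → ℝ) (hUs : ContDiff ℝ 4 Us)
    (hUsa' : deriv Us a = 0)
    (b : ℝ) (hb : b = deriv (deriv Us) a) (hb0 : b ≠ 0)
    (hUsbd : ∀ j : ℕ, j ≤ 4 → ∃ M : ℝ, ∀ y : ℝ, 0 ≤ y →
      Real.exp (α * y) * |iteratedDeriv j Us y| ≤ M)
    (κ : ℝ) (hκ : κ = (|b| / 2) ^ ((1 : ℝ) / 4))
    (W : ℝ → ℂ) (hW : Differentiable ℝ W)
    (CW c : ℝ) (hCW : 0 < CW) (hc : 0 < c)
    (hW1 : ∀ z : ℝ, 0 ≤ z → ‖W z - 1‖ ≤ CW * Real.exp (-c * z ^ 2))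
    (hW0 : ∀ z : ℝ, z < 0 → ‖W z‖ ≤ CW * Real.exp (-c * z ^ 2))
    (hW' : ∀ z : ℝ, ‖deriv W z‖ ≤ CW * Real.exp (-c * z ^ 2))
    (F1 F2 R : ℕ → ℝ → ℂ)
    (hF1 : ∀ (k : ℕ) (y : ℝ), F1 k y =
      ((Us y - Us a - b / 2 * (y - a) ^ 2 : ℝ) : ℂ) * (b : ℂ) * ((y - a : ℝ) : ℂ)
        - ((deriv Us y - b * (y - a) : ℝ) : ℂ) *
            (τ * (((k : ℝ) ^ (-(1 : ℝ) / 2) : ℝ) : ℂ)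
              + ((b / 2 * (y - a) ^ 2 : ℝ) : ℂ)))
    (hF2 : ∀ (k : ℕ) (y : ℝ), F2 k y =
      ((Us y - Us a - b / 2 * (y - a) ^ 2 : ℝ) : ℂ) *
        (τ * (((k : ℝ) ^ (-(1 : ℝ) / 2) : ℝ) : ℂ)
          + ((b / 2 * (y - a) ^ 2 : ℝ) : ℂ)))
    (hR : ∀ (k : ℕ) (y : ℝ), R k y =
      Complex.I * (((k : ℝ) ^ (-(1 : ℝ)) : ℝ) : ℂ) * Heav (y - a) *
          ((iteratedDeriv 3 Us y : ℝ) : ℂ)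
        + F1 k y * (W (κ * (k : ℝ) ^ ((1 : ℝ) / 4) * (y - a)) - Heav (y - a))
        + F2 k y * deriv W (κ * (k : ℝ) ^ ((1 : ℝ) / 4) * (y - a))) :
    ∃ CR : ℝ, 0 < CR ∧ ∀ (k : ℕ), 1 ≤ k → ∀ y : ℝ, 0 ≤ y →
      (k : ℝ) * (Real.exp (α * y) * ‖R k y‖) ≤ CR := by
  obtain ⟨M0, hM0⟩ := hUsbd 3 (by norm_num)
  set M := max M0 1 with hMdef
  have hM1 : (1:ℝ) ≤ M := le_max_right _ _
  have hMpos : (0:ℝ) < M := lt_of_lt_of_le one_pos hM1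
  have hMexp : ∀ x : ℝ, 0 ≤ x → Real.exp (α * x) * |iteratedDeriv 3 Us x| ≤ M :=
    fun x hx => le_trans (hM0 x hx) (le_max_left _ _)
  have hM3 : ∀ x : ℝ, 0 ≤ x → |iteratedDeriv 3 Us x| ≤ M := by
    intro x hx
    have h1 : 1 ≤ Real.exp (α * x) := Real.one_le_exp (by positivity)
    calc |iteratedDeriv 3 Us x| = 1 * |iteratedDeriv 3 Us x| := (one_mul _).symm
      _ ≤ Real.exp (α * x) * |iteratedDeriv 3 Us x| :=
          mul_le_mul_of_nonneg_right h1 (abs_nonneg _)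
      _ ≤ M := hMexp x hx
  obtain ⟨h2d, h1d, h0d⟩ := taylor_bounds Us hUs a ha.le hUsa' b hb M hMpos.le hM3
  have hbpos : 0 < |b| := abs_pos.mpr hb0
  have hκpos : 0 < κ := by rw [hκ]; positivity
  set c₂ : ℝ := c * κ ^ 2 / 2 with hc₂
  have hc20 : 0 < c₂ := by
    rw [hc₂]; exact div_pos (mul_pos hc (pow_pos hκpos 2)) two_pos
  have h4c2 : (0:ℝ) ≤ 4 / c₂ ^ 2 := div_nonneg (by norm_num) (sq_nonneg _)
  have h1c2 : (0:ℝ) ≤ 1 / c₂ := (one_div_nonneg).mpr hc20.le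
  set D1 : ℝ := M * (3 * |b| / 2) * (4 / c₂ ^ 2) + M * ‖τ‖ * (1 / c₂) with hD1def
  set D2 : ℝ := Real.exp (α ^ 2 / (4 * c₂)) with hD2def
  set D1' : ℝ := M * ‖τ‖ * (1 / c₂) + M * (|b| / 2) * (4 / c₂ ^ 2) with hD1'def
  set D2' : ℝ := Real.exp ((α + 1) ^ 2 / (4 * c₂)) with hD2'def
  have hD1nn : 0 ≤ D1 := by
    rw [hD1def]
    have := norm_nonneg τ
    have := abs_nonneg b
    positivity
  have hD1'nn : 0 ≤ D1' := by
    rw [hD1'def]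
    have := norm_nonneg τ
    have := abs_nonneg b
    positivity
  have hD2pos : 0 < D2 := hD2def ▸ Real.exp_pos _
  have hD2'pos : 0 < D2' := hD2'def ▸ Real.exp_pos _
  refine ⟨M + Real.exp (α * a) * ((CW + 1) * (D1 * D2))
      + Real.exp (α * a) * (CW * (D1' * D2')) + 1, ?_, ?_⟩
  · have e1 : (0:ℝ) ≤ Real.exp (α * a) * ((CW + 1) * (D1 * D2)) :=
      mul_nonneg (Real.exp_pos _).le
        (mul_nonneg (by linarith) (mul_nonneg hD1nn hD2pos.le))
    have e2 : (0:ℝ) ≤ Real.exp (α * a) * (CW * (D1' * D2')) :=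
      mul_nonneg (Real.exp_pos _).le
        (mul_nonneg hCW.le (mul_nonneg hD1'nn hD2'pos.le))
    linarith
  intro k hk y hy
  have hK1 : (1:ℝ) ≤ (k:ℝ) := by exact_mod_cast hk
  have hK0 : (0:ℝ) < (k:ℝ) := by linarith
  rw [hR k y]
  set t := |y - a| with htdef
  have htnn : 0 ≤ t := htdef ▸ abs_nonneg _
  set Q := (k:ℝ) ^ ((1:ℝ)/2) with hQdef
  have hQ0 : 0 < Q := hQdef ▸ Real.rpow_pos_of_pos hK0 _
  have hQ1 : (1:ℝ) ≤ Q := by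
    rw [hQdef]
    calc (1:ℝ) = 1 ^ ((1:ℝ)/2) := (Real.one_rpow _).symm
      _ ≤ (k:ℝ) ^ ((1:ℝ)/2) := Real.rpow_le_rpow zero_le_one hK1 (by norm_num)
  have hQsq : Q ^ 2 = (k:ℝ) := by
    rw [hQdef, ← Real.rpow_natCast ((k:ℝ) ^ ((1:ℝ)/2)) 2, ← Real.rpow_mul hK0.le]
    norm_num
  have hKhalf : (k:ℝ) ^ (-(1:ℝ)/2) = Q⁻¹ := by
    rw [hQdef, ← Real.rpow_neg hK0.le]
    norm_num
  have h14sq : ((k:ℝ) ^ ((1:ℝ)/4)) ^ 2 = Q := by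
    rw [hQdef, ← Real.rpow_natCast ((k:ℝ) ^ ((1:ℝ)/4)) 2, ← Real.rpow_mul hK0.le]
    norm_num
  set S := Q * t ^ 2 with hSdef
  have hS0 : 0 ≤ S := hSdef ▸ mul_nonneg hQ0.le (sq_nonneg _)
  have hSt : t ^ 2 ≤ S := by
    rw [hSdef]
    have := mul_le_mul_of_nonneg_right hQ1 (sq_nonneg t)
    linarith
  set z := κ * (k:ℝ) ^ ((1:ℝ)/4) * (y - a) with hzdef
  have hz2 : z ^ 2 = κ ^ 2 * S := by
    have e : (κ * (k:ℝ) ^ ((1:ℝ)/4) * (y - a)) ^ 2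
        = κ ^ 2 * (((k:ℝ) ^ ((1:ℝ)/4)) ^ 2 * (y - a) ^ 2) := by ring
    rw [hzdef, e, h14sq, hSdef, htdef, sq_abs]
  have hexp : Real.exp (-c * z ^ 2) = Real.exp (-(c₂ * S)) * Real.exp (-(c₂ * S)) := by
    rw [← Real.exp_add, hz2, hc₂]
    congr 1; ring
  have hE2 : Real.exp (-(c₂ * S)) ≤ Real.exp (-(c₂ * t ^ 2)) := by
    apply Real.exp_le_exp.mpr
    have := mul_le_mul_of_nonneg_left hSt hc20.le
    linarith
  -- W bounds
  have hWH : ‖W z - Heav (y - a)‖ ≤ (CW + 1) * (Real.exp (-(c₂ * S)) * Real.exp (-(c₂ * S))) := by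
    rw [← hexp]
    rcases lt_or_ge 0 (y - a) with hpos | hle
    · have hzpos : 0 < z := by
        rw [hzdef]
        exact mul_pos (mul_pos hκpos (Real.rpow_pos_of_pos hK0 _)) hpos
      have hH : Heav (y - a) = 1 := by simp [Heav, hpos]
      rw [hH]
      refine le_trans (hW1 z hzpos.le) ?_
      exact mul_le_mul_of_nonneg_right (by linarith) (Real.exp_pos _).le
    · have hH : Heav (y - a) = 0 := by simp [Heav, not_lt.mpr hle]
      rw [hH, sub_zero]
      rcases hle.lt_or_eq with hlt | heq
      · have hzneg : z < 0 := by
          rw [hzdef]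
          exact mul_neg_of_pos_of_neg (mul_pos hκpos (Real.rpow_pos_of_pos hK0 _)) hlt
        refine le_trans (hW0 z hzneg) ?_
        exact mul_le_mul_of_nonneg_right (by linarith) (Real.exp_pos _).le
      · have hz0 : z = 0 := by rw [hzdef, heq, mul_zero]
        rw [hz0]
        have h01 := hW1 0 le_rfl
        have hn : ‖W 0‖ ≤ ‖W 0 - 1‖ + 1 := by
          calc ‖W 0‖ = ‖(W 0 - 1) + 1‖ := by ring_nf
            _ ≤ ‖W 0 - 1‖ + ‖(1:ℂ)‖ := norm_add_le _ _
            _ = ‖W 0 - 1‖ + 1 := by rw [norm_one]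
        have he0 : Real.exp (-c * (0:ℝ) ^ 2) = 1 := by norm_num
        rw [he0] at h01 ⊢
        linarith
  have hW'b : ‖deriv W z‖ ≤ CW * (Real.exp (-(c₂ * S)) * Real.exp (-(c₂ * S))) := by
    rw [← hexp]; exact hW' z
  have hHle : ‖Heav (y - a)‖ ≤ 1 := by
    by_cases hp : 0 < y - a <;> simp [Heav, hp]
  have heay : Real.exp (α * y) ≤ Real.exp (α * a) * Real.exp (α * t) := by
    rw [← Real.exp_add]
    apply Real.exp_le_exp.mpr
    rw [htdef]
    have h := mul_le_mul_of_nonneg_left (le_abs_self (y - a)) hα.le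
    linarith
  -- F bounds
  have hg0 : |Us y - Us a - b / 2 * (y - a) ^ 2| ≤ M * t ^ 3 := by
    rw [htdef]; exact h0d y hy
  have hg1 : |deriv Us y - b * (y - a)| ≤ M * t ^ 2 := by
    rw [htdef]; exact h1d y hy
  have hTk : ‖τ * (((k:ℝ) ^ (-(1:ℝ)/2) : ℝ) : ℂ) + ((b / 2 * (y - a) ^ 2 : ℝ) : ℂ)‖
      ≤ ‖τ‖ * Q⁻¹ + |b| / 2 * t ^ 2 := by
    refine le_trans (norm_add_le _ _) ?_
    rw [norm_mul, Complex.norm_real, Complex.norm_real, Real.norm_eq_abs, Real.norm_eq_abs]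
    have e1 : |(k:ℝ) ^ (-(1:ℝ)/2)| = Q⁻¹ := by
      rw [abs_of_nonneg (Real.rpow_nonneg hK0.le _), hKhalf]
    have e2 : |b / 2 * (y - a) ^ 2| = |b| / 2 * t ^ 2 := by
      rw [abs_mul, abs_div, abs_two, abs_of_nonneg (sq_nonneg (y - a)), htdef, sq_abs]
    rw [e1, e2]
  have hTknn : (0:ℝ) ≤ ‖τ‖ * Q⁻¹ + |b| / 2 * t ^ 2 :=
    add_nonneg (mul_nonneg (norm_nonneg τ) (inv_nonneg.mpr hQ0.le))
      (mul_nonneg (div_nonneg (abs_nonneg b) two_pos.le) (sq_nonneg t))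
  have hF1n : ‖F1 k y‖ ≤ M * t ^ 3 * |b| * t + M * t ^ 2 * (‖τ‖ * Q⁻¹ + |b| / 2 * t ^ 2) := by
    rw [hF1 k y]
    refine le_trans (norm_sub_le _ _) (add_le_add ?_ ?_)
    · rw [norm_mul, norm_mul, Complex.norm_real, Complex.norm_real, Complex.norm_real,
        Real.norm_eq_abs, Real.norm_eq_abs, Real.norm_eq_abs]
      calc |Us y - Us a - b / 2 * (y - a) ^ 2| * |b| * |y - a|
          ≤ (M * t ^ 3) * |b| * t := by
            rw [← htdef]
            exact mul_le_mul_of_nonneg_right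
              (mul_le_mul_of_nonneg_right hg0 (abs_nonneg b)) htnn
        _ = M * t ^ 3 * |b| * t := by ring
    · rw [norm_mul, Complex.norm_real, Real.norm_eq_abs]
      exact mul_le_mul hg1 hTk (norm_nonneg _) (by positivity)
  have hF2n : ‖F2 k y‖ ≤ M * t ^ 3 * (‖τ‖ * Q⁻¹ + |b| / 2 * t ^ 2) := by
    rw [hF2 k y, norm_mul, Complex.norm_real, Real.norm_eq_abs]
    exact mul_le_mul hg0 hTk (norm_nonneg _) (by positivity)
  -- multiply by k
  have hKF1 : (k:ℝ) * ‖F1 k y‖ ≤ M * (3 * |b| / 2) * S ^ 2 + M * ‖τ‖ * S := by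
    refine le_trans (mul_le_mul_of_nonneg_left hF1n hK0.le) (le_of_eq ?_)
    rw [hSdef, ← hQsq]
    field_simp
    ring
  have hKF2 : (k:ℝ) * ‖F2 k y‖ ≤ (M * ‖τ‖ * S + M * (|b| / 2) * S ^ 2) * t := by
    refine le_trans (mul_le_mul_of_nonneg_left hF2n hK0.le) (le_of_eq ?_)
    rw [hSdef, ← hQsq]
    field_simp
  -- gaussian absorption
  have p1 := aux_lin_exp c₂ S hc20 hS0
  have p2 := aux_sq_exp c₂ S hc20 hS0
  have q1 : (0:ℝ) ≤ M * (3 * |b| / 2) := mul_nonneg hMpos.le (by positivity)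
  have q2 : (0:ℝ) ≤ M * ‖τ‖ := mul_nonneg hMpos.le (norm_nonneg τ)
  have q3 : (0:ℝ) ≤ M * (|b| / 2) := mul_nonneg hMpos.le (by positivity)
  have hgauss1 : (M * (3 * |b| / 2) * S ^ 2 + M * ‖τ‖ * S) * Real.exp (-(c₂ * S)) ≤ D1 := by
    rw [hD1def]
    calc (M * (3 * |b| / 2) * S ^ 2 + M * ‖τ‖ * S) * Real.exp (-(c₂ * S))
        = M * (3 * |b| / 2) * (S ^ 2 * Real.exp (-(c₂ * S)))
          + M * ‖τ‖ * (S * Real.exp (-(c₂ * S))) := by ring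
      _ ≤ M * (3 * |b| / 2) * (4 / c₂ ^ 2) + M * ‖τ‖ * (1 / c₂) :=
          add_le_add (mul_le_mul_of_nonneg_left p2 q1) (mul_le_mul_of_nonneg_left p1 q2)
  have hgauss2 : (M * ‖τ‖ * S + M * (|b| / 2) * S ^ 2) * Real.exp (-(c₂ * S)) ≤ D1' := by
    rw [hD1'def]
    calc (M * ‖τ‖ * S + M * (|b| / 2) * S ^ 2) * Real.exp (-(c₂ * S))
        = M * ‖τ‖ * (S * Real.exp (-(c₂ * S)))
          + M * (|b| / 2) * (S ^ 2 * Real.exp (-(c₂ * S))) := by ring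
      _ ≤ M * ‖τ‖ * (1 / c₂) + M * (|b| / 2) * (4 / c₂ ^ 2) :=
          add_le_add (mul_le_mul_of_nonneg_left p1 q2) (mul_le_mul_of_nonneg_left p2 q3)
  have hquad : Real.exp (α * t) * Real.exp (-(c₂ * t ^ 2)) ≤ D2 := by
    rw [← Real.exp_add, hD2def]
    have e : α * t + -(c₂ * t ^ 2) = α * t - c₂ * t ^ 2 := by ring
    rw [e]
    exact aux_quad α c₂ t hc20
  have hquad' : t * (Real.exp (α * t) * Real.exp (-(c₂ * t ^ 2))) ≤ D2' := by
    have hte : t ≤ Real.exp t := by linarith [Real.add_one_le_exp t]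
    calc t * (Real.exp (α * t) * Real.exp (-(c₂ * t ^ 2)))
        ≤ Real.exp t * (Real.exp (α * t) * Real.exp (-(c₂ * t ^ 2))) :=
          mul_le_mul_of_nonneg_right hte (by positivity)
      _ = Real.exp ((α + 1) * t - c₂ * t ^ 2) := by
          rw [← Real.exp_add, ← Real.exp_add]; congr 1; ring
      _ ≤ D2' := by rw [hD2'def]; exact aux_quad (α + 1) c₂ t hc20
  -- the three term bounds
  have hA : (k:ℝ) * Real.exp (α * y) *
      ‖Complex.I * (((k:ℝ) ^ (-(1:ℝ)) : ℝ) : ℂ) * Heav (y - a) *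
        ((iteratedDeriv 3 Us y : ℝ) : ℂ)‖ ≤ M := by
    rw [norm_mul, norm_mul, norm_mul, Complex.norm_I, one_mul, Complex.norm_real,
      Real.norm_eq_abs, Complex.norm_real, Real.norm_eq_abs,
      abs_of_nonneg (Real.rpow_nonneg hK0.le _), Real.rpow_neg_one]
    calc (k:ℝ) * Real.exp (α * y) * ((k:ℝ)⁻¹ * ‖Heav (y - a)‖ * |iteratedDeriv 3 Us y|)
        = (Real.exp (α * y) * |iteratedDeriv 3 Us y|) * ‖Heav (y - a)‖ * ((k:ℝ) * (k:ℝ)⁻¹) := by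
          ring
      _ = (Real.exp (α * y) * |iteratedDeriv 3 Us y|) * ‖Heav (y - a)‖ := by
          rw [mul_inv_cancel₀ hK0.ne', mul_one]
      _ ≤ M * 1 := mul_le_mul (hMexp y hy) hHle (norm_nonneg _) hMpos.le
      _ = M := mul_one M
  have hBt : (k:ℝ) * Real.exp (α * y) * (‖F1 k y‖ * ‖W z - Heav (y - a)‖)
      ≤ Real.exp (α * a) * ((CW + 1) * (D1 * D2)) := by
    calc (k:ℝ) * Real.exp (α * y) * (‖F1 k y‖ * ‖W z - Heav (y - a)‖)
        ≤ (k:ℝ) * (Real.exp (α * a) * Real.exp (α * t)) *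
            (‖F1 k y‖ * ((CW + 1) * (Real.exp (-(c₂ * S)) * Real.exp (-(c₂ * S))))) := by
          apply mul_le_mul (mul_le_mul_of_nonneg_left heay hK0.le)
            (mul_le_mul_of_nonneg_left hWH (norm_nonneg _)) (by positivity) (by positivity)
      _ = Real.exp (α * a) * ((CW + 1) *
            ((((k:ℝ) * ‖F1 k y‖) * Real.exp (-(c₂ * S))) *
              (Real.exp (α * t) * Real.exp (-(c₂ * S))))) := by ring
      _ ≤ Real.exp (α * a) * ((CW + 1) *
            ((((k:ℝ) * ‖F1 k y‖) * Real.exp (-(c₂ * S))) *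
              (Real.exp (α * t) * Real.exp (-(c₂ * t ^ 2))))) := by
          refine mul_le_mul_of_nonneg_left (mul_le_mul_of_nonneg_left
            (mul_le_mul_of_nonneg_left
              (mul_le_mul_of_nonneg_left hE2 (Real.exp_pos _).le)
              (by positivity)) (by linarith)) (Real.exp_pos _).le
      _ ≤ Real.exp (α * a) * ((CW + 1) *
            (((M * (3 * |b| / 2) * S ^ 2 + M * ‖τ‖ * S) * Real.exp (-(c₂ * S))) *
              (Real.exp (α * t) * Real.exp (-(c₂ * t ^ 2))))) := by
          refine mul_le_mul_of_nonneg_left (mul_le_mul_of_nonneg_left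
            (mul_le_mul_of_nonneg_right
              (mul_le_mul_of_nonneg_right hKF1 (Real.exp_pos _).le)
              (by positivity)) (by linarith)) (Real.exp_pos _).le
      _ ≤ Real.exp (α * a) * ((CW + 1) * (D1 * D2)) := by
          refine mul_le_mul_of_nonneg_left (mul_le_mul_of_nonneg_left
            (mul_le_mul hgauss1 hquad (by positivity) hD1nn) (by linarith))
            (Real.exp_pos _).le
  have hCt : (k:ℝ) * Real.exp (α * y) * (‖F2 k y‖ * ‖deriv W z‖)
      ≤ Real.exp (α * a) * (CW * (D1' * D2')) := by
    calc (k:ℝ) * Real.exp (α * y) * (‖F2 k y‖ * ‖deriv W z‖)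
        ≤ (k:ℝ) * (Real.exp (α * a) * Real.exp (α * t)) *
            (‖F2 k y‖ * (CW * (Real.exp (-(c₂ * S)) * Real.exp (-(c₂ * S))))) := by
          apply mul_le_mul (mul_le_mul_of_nonneg_left heay hK0.le)
            (mul_le_mul_of_nonneg_left hW'b (norm_nonneg _)) (by positivity) (by positivity)
      _ = Real.exp (α * a) * (CW *
            ((((k:ℝ) * ‖F2 k y‖) * Real.exp (-(c₂ * S))) *
              (Real.exp (α * t) * Real.exp (-(c₂ * S))))) := by ring
      _ ≤ Real.exp (α * a) * (CW *
            ((((k:ℝ) * ‖F2 k y‖) * Real.exp (-(c₂ * S))) *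
              (Real.exp (α * t) * Real.exp (-(c₂ * t ^ 2))))) := by
          refine mul_le_mul_of_nonneg_left (mul_le_mul_of_nonneg_left
            (mul_le_mul_of_nonneg_left
              (mul_le_mul_of_nonneg_left hE2 (Real.exp_pos _).le)
              (by positivity)) hCW.le) (Real.exp_pos _).le
      _ ≤ Real.exp (α * a) * (CW *
            ((((M * ‖τ‖ * S + M * (|b| / 2) * S ^ 2) * t) * Real.exp (-(c₂ * S))) *
              (Real.exp (α * t) * Real.exp (-(c₂ * t ^ 2))))) := by
          refine mul_le_mul_of_nonneg_left (mul_le_mul_of_nonneg_left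
            (mul_le_mul_of_nonneg_right
              (mul_le_mul_of_nonneg_right hKF2 (Real.exp_pos _).le)
              (by positivity)) hCW.le) (Real.exp_pos _).le
      _ = Real.exp (α * a) * (CW *
            (((M * ‖τ‖ * S + M * (|b| / 2) * S ^ 2) * Real.exp (-(c₂ * S))) *
              (t * (Real.exp (α * t) * Real.exp (-(c₂ * t ^ 2)))))) := by ring
      _ ≤ Real.exp (α * a) * (CW * (D1' * D2')) := by
          refine mul_le_mul_of_nonneg_left (mul_le_mul_of_nonneg_left
            (mul_le_mul hgauss2 hquad' ?_ hD1'nn) hCW.le) (Real.exp_pos _).le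
          exact mul_nonneg htnn (by positivity)
  -- final assembly
  have htri : ‖Complex.I * (((k:ℝ) ^ (-(1:ℝ)) : ℝ) : ℂ) * Heav (y - a) *
        ((iteratedDeriv 3 Us y : ℝ) : ℂ)
      + F1 k y * (W z - Heav (y - a)) + F2 k y * deriv W z‖
      ≤ ‖Complex.I * (((k:ℝ) ^ (-(1:ℝ)) : ℝ) : ℂ) * Heav (y - a) *
          ((iteratedDeriv 3 Us y : ℝ) : ℂ)‖
        + ‖F1 k y‖ * ‖W z - Heav (y - a)‖ + ‖F2 k y‖ * ‖deriv W z‖ :=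
    tri_aux _ _ _ _ _
  calc (k:ℝ) * (Real.exp (α * y) *
        ‖Complex.I * (((k:ℝ) ^ (-(1:ℝ)) : ℝ) : ℂ) * Heav (y - a) *
            ((iteratedDeriv 3 Us y : ℝ) : ℂ)
          + F1 k y * (W z - Heav (y - a)) + F2 k y * deriv W z‖)
      ≤ (k:ℝ) * (Real.exp (α * y) *
          (‖Complex.I * (((k:ℝ) ^ (-(1:ℝ)) : ℝ) : ℂ) * Heav (y - a) *
              ((iteratedDeriv 3 Us y : ℝ) : ℂ)‖
            + ‖F1 k y‖ * ‖W z - Heav (y - a)‖ + ‖F2 k y‖ * ‖deriv W z‖)) := by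
        exact mul_le_mul_of_nonneg_left
          (mul_le_mul_of_nonneg_left htri (Real.exp_pos _).le) hK0.le
    _ = (k:ℝ) * Real.exp (α * y) *
          ‖Complex.I * (((k:ℝ) ^ (-(1:ℝ)) : ℝ) : ℂ) * Heav (y - a) *
            ((iteratedDeriv 3 Us y : ℝ) : ℂ)‖
        + (k:ℝ) * Real.exp (α * y) * (‖F1 k y‖ * ‖W z - Heav (y - a)‖)
        + (k:ℝ) * Real.exp (α * y) * (‖F2 k y‖ * ‖deriv W z‖) := by ring
    _ ≤ M + Real.exp (α * a) * ((CW + 1) * (D1 * D2))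
        + Real.exp (α * a) * (CW * (D1' * D2')) := add_le_add (add_le_add hA hBt) hCt
    _ ≤ M + Real.exp (α * a) * ((CW + 1) * (D1 * D2))
        + Real.exp (α * a) * (CW * (D1' * D2')) + 1 := by linarith
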